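/- If (X,𝓔) is a finitary indiscrete coarse space with (X,𝓔) = X_G, then there exists a free ultrafilter p on X whose orbit Gp is not discrete in X*. Equivalently, X itself is not scattered: X contains a piece-wise shifted FP-set. -/

import Mathlib

open Set

/-- A coarse structure on a set `X`. -/
structure CoarseStructure (X : Type*) where
  sets : Set (Set (X × X))
  diagonal_mem : ∀ E ∈ sets, ∀ x : X, (x, x) ∈ E
  comp_mem : ∀ E ∈ sets, ∀ E' ∈ sets,
    {q : X × X | ∃ z : X, (q.1, z) ∈ E ∧ (z, q.2) ∈ E'} ∈ sets
  inv_mem : ∀ E ∈ sets, {q : X × X | (q.2, q.1) ∈ E} ∈ sets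
  subset_mem : ∀ E ∈ sets, ∀ E', E' ⊆ E → (∀ x : X, (x, x) ∈ E') → E' ∈ sets
  covers : ⋃₀ sets = Set.univ

/-- The ball `E[A]`. -/
def ball {X : Type*} (E : Set (X × X)) (A : Set X) : Set X := {y | ∃ a ∈ A, (a, y) ∈ E}

/-- A bounded subset of a coarse space. -/
def CoarseStructure.Bounded {X : Type*} (C : CoarseStructure X) (B : Set X) : Prop :=
  ∃ E ∈ C.sets, ∃ x : X, B ⊆ ball E {x}

/-- A finitary coarse space: uniformly finite balls. -/
def CoarseStructure.Finitary {X : Type*} (C : CoarseStructure X) : Prop :=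
  ∀ E ∈ C.sets, ∃ n : ℕ, ∀ x : X, (ball E {x}).Finite ∧ (ball E {x}).ncard < n

/-- The set `X^♯` of ultrafilters all of whose members are unbounded. -/
def CoarseStructure.Sharp {X : Type*} (C : CoarseStructure X) : Set (Ultrafilter X) :=
  {p | ∀ P ∈ p, ¬ C.Bounded P}

/-- The parallelity relation on ultrafilters. -/
def CoarseStructure.Parallel {X : Type*} (C : CoarseStructure X) (p q : Ultrafilter X) : Prop :=
  ∃ E ∈ C.sets, ∀ P ∈ p, ball E P ∈ q

/-- The entourage determined by a set of permutations. -/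
def entourage {X : Type*} (F : Set (Equiv.Perm X)) : Set (X × X) :=
  {q | ∃ g ∈ F, q.2 = g q.1}

/-- The finitary coarse structure `X_G` determined by a group `G` of permutations of `X`:
its entourages are the diagonal-containing subsets of `{(x,gx) : x ∈ X, g ∈ F}`
for finite `F ⊆ G` with `id ∈ F`. -/
def XGsets {X : Type*} (G : Subgroup (Equiv.Perm X)) : Set (Set (X × X)) :=
  {E | (∀ x : X, (x, x) ∈ E) ∧ ∃ F : Finset (Equiv.Perm X),
    (1 : Equiv.Perm X) ∈ F ∧ ↑F ⊆ (G : Set (Equiv.Perm X)) ∧ E ⊆ entourage ↑F}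

/-- A free ultrafilter. -/
def IsFree {X : Type*} (p : Ultrafilter X) : Prop := (p : Filter X) ≤ Filter.cofinite

/-- `X*`, the space of free ultrafilters with the Stone topology. -/
def FreeUF (X : Type*) : Type _ := {p : Ultrafilter X // IsFree p}

instance (X : Type*) : TopologicalSpace (FreeUF X) :=
  instTopologicalSpaceSubtype

/-- The orbit `Gp` of an ultrafilter under the induced action `gp = {gP : P ∈ p}`. -/
def ufOrbit {X : Type*} (G : Subgroup (Equiv.Perm X)) (p : Ultrafilter X) :
    Set (Ultrafilter X) :=
  {q | ∃ g ∈ G, q = Ultrafilter.map (⇑g) p}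

/-- The `p`-companion `Δ_p(A) = A* ∩ Gp`. -/
def compan {X : Type*} (G : Subgroup (Equiv.Perm X)) (p : Ultrafilter X) (A : Set X) :
    Set (Ultrafilter X) :=
  {q | A ∈ q ∧ q ∈ ufOrbit G p}

/-- Large subsets of `X_G`. -/
def IsLarge {X : Type*} (G : Subgroup (Equiv.Perm X)) (A : Set X) : Prop :=
  ∃ E ∈ XGsets G, ball E A = Set.univ

/-- Thick subsets of `X_G`. -/
def IsThick {X : Type*} (G : Subgroup (Equiv.Perm X)) (A : Set X) : Prop :=
  ∀ E ∈ XGsets G, ∃ a ∈ A, ball E {a} ⊆ A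

/-- Thin (discrete) subsets of `X_G`. -/
def IsThin {X : Type*} (G : Subgroup (Equiv.Perm X)) (A : Set X) : Prop :=
  ∀ E ∈ XGsets G, ∃ B : Set X, B.Finite ∧ ∀ a ∈ A \ B, ball E {a} ∩ A = {a}

/-- Sparse subsets of `X_G`. -/
def IsSparse {X : Type*} (G : Subgroup (Equiv.Perm X)) (A : Set X) : Prop :=
  ∀ p : Ultrafilter X, IsFree p → (compan G p A).Finite

/-- Scattered subsets of `X_G`. -/
def IsScattered {X : Type*} (G : Subgroup (Equiv.Perm X)) (A : Set X) : Prop :=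
  ∀ Y ⊆ A, Y.Infinite →
    ∃ p : Ultrafilter X, IsFree p ∧ Y ∈ p ∧ (compan G p Y).Finite

/-- Close subsets of a coarse space. -/
def CoarseStructure.Close {X : Type*} (C : CoarseStructure X) (A B : Set X) : Prop :=
  ∃ E ∈ C.sets, A ⊆ ball E B ∧ B ⊆ ball E A

/-- Close subsets of `X_G`. -/
def CloseG {X : Type*} (G : Subgroup (Equiv.Perm X)) (A B : Set X) : Prop :=
  ∃ E ∈ XGsets G, A ⊆ ball E B ∧ B ⊆ ball E A

/-- Linked subsets of `X_G`. -/
def LinkedG {X : Type*} (G : Subgroup (Equiv.Perm X)) (A B : Set X) : Prop :=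
  (A.Finite ∧ B.Finite) ∨
    ∃ A' ⊆ A, ∃ B' ⊆ B, A'.Infinite ∧ B'.Infinite ∧ CloseG G A' B'


open Set

/-- The `n`-th block `{g_0^{ε_0} ⋯ g_n^{ε_n} x_n : ε_i ∈ {0,1}}`. -/
def pwBlock {X : Type*} (g : ℕ → Equiv.Perm X) (x : ℕ → X) (n : ℕ) : Set X :=
  {y | ∃ ε : Fin (n + 1) → Bool,
    y = ((List.ofFn fun i : Fin (n + 1) =>
      (g i) ^ (if ε i then 1 else 0)).prod : Equiv.Perm X) (x n)}

/-- A piece-wise shifted FP-set determined by the group `G`. -/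
def IsPWShiftedFP {X : Type*} (G : Subgroup (Equiv.Perm X)) (Y : Set X) : Prop :=
  ∃ g : ℕ → Equiv.Perm X, ∃ x : ℕ → X,
    (∀ n, g n ∈ G) ∧
    (∀ m n, m ≠ n → Disjoint (pwBlock g x m) (pwBlock g x n)) ∧
    (∀ n, (pwBlock g x n).ncard = 2 ^ (n + 1)) ∧
    Y = ⋃ n, pwBlock g x n

/-- The group of all self-homeomorphisms of a topological space, as a subgroup
of the permutation group. -/
def homeoSubgroup (X : Type*) [TopologicalSpace X] : Subgroup (Equiv.Perm X) where
  carrier := {g | Continuous g ∧ Continuous g.symm}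
  one_mem' := ⟨continuous_id, continuous_id⟩
  mul_mem' := by
    rintro a b ⟨ha1, ha2⟩ ⟨hb1, hb2⟩
    refine ⟨?_, ?_⟩
    · simpa [Equiv.Perm.mul_def, Equiv.coe_trans] using ha1.comp hb1
    · simpa [Equiv.Perm.mul_def, Equiv.symm_trans_apply] using (hb2.comp ha2 : _)
  inv_mem' := by
    rintro a ⟨ha1, ha2⟩
    exact ⟨ha2, by rw [Equiv.Perm.inv_def, Equiv.symm_symm]; exact ha1⟩


/-- The parallelity relation on ultrafilters over the coarse space `X_G`. -/
def ParallelG {X : Type*} (G : Subgroup (Equiv.Perm X)) (p q : Ultrafilter X) : Prop :=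
  ∃ E ∈ XGsets G, ∀ P ∈ p, ball E P ∈ q

/-- Linked subsets of a coarse space. -/
def CoarseStructure.Linked {X : Type*} (C : CoarseStructure X) (A B : Set X) : Prop :=
  (C.Bounded A ∧ C.Bounded B) ∨
    ∃ A' ⊆ A, ∃ B' ⊆ B, ¬ C.Bounded A' ∧ ¬ C.Bounded B' ∧ C.Close A' B'

/-- The orbit `Gp` viewed as a subset of the space `X*` of free ultrafilters. -/
def freeOrbit {X : Type*} (G : Subgroup (Equiv.Perm X)) (p : Ultrafilter X) :
    Set (FreeUF X) :=
  {q | q.1 ∈ ufOrbit G p}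

namespace IndiscreteAux

attribute [local instance] Classical.propDecidable

variable {X : Type*}

/-- Ordered partial product `g k ^ ε k * g (k+1) ^ ε (k+1) * ⋯` of `n` terms. -/
def wseg (g : ℕ → Equiv.Perm X) (ε : ℕ → Bool) : ℕ → ℕ → Equiv.Perm X
  | _, 0 => 1
  | k, n + 1 => (g k ^ (if ε k then 1 else 0)) * wseg g ε (k + 1) n

@[simp] lemma wseg_zero (g : ℕ → Equiv.Perm X) (ε : ℕ → Bool) (k : ℕ) :
    wseg g ε k 0 = 1 := rfl

lemma wseg_succ (g : ℕ → Equiv.Perm X) (ε : ℕ → Bool) (k n : ℕ) :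
    wseg g ε k (n + 1) = (g k ^ (if ε k then 1 else 0)) * wseg g ε (k + 1) n := rfl

lemma wseg_add (g : ℕ → Equiv.Perm X) (ε : ℕ → Bool) (k m l : ℕ) :
    wseg g ε k (m + l) = wseg g ε k m * wseg g ε (k + m) l := by
  induction m generalizing k with
  | zero => simp
  | succ m ih =>
      have h1 : m + 1 + l = (m + l) + 1 := by omega
      have h2 : k + 1 + m = k + (m + 1) := by omega
      rw [h1, wseg_succ, wseg_succ, ih (k + 1), h2, mul_assoc]

lemma wseg_congr (g : ℕ → Equiv.Perm X) {ε ε' : ℕ → Bool} (k n : ℕ)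
    (h : ∀ i, k ≤ i → i < k + n → ε i = ε' i) :
    wseg g ε k n = wseg g ε' k n := by
  induction n generalizing k with
  | zero => simp
  | succ n ih =>
      rw [wseg_succ, wseg_succ, h k (le_refl k) (by omega), ih (k + 1) (by
        intro i h1 h2; exact h i (by omega) (by omega))]

lemma wseg_congr_g {g g' : ℕ → Equiv.Perm X} (ε : ℕ → Bool) (k n : ℕ)
    (h : ∀ i, k ≤ i → i < k + n → g i = g' i) :
    wseg g ε k n = wseg g' ε k n := by
  induction n generalizing k with
  | zero => simp
  | succ n ih =>
      rw [wseg_succ, wseg_succ, h k (le_refl k) (by omega), ih (k + 1) (by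
        intro i h1 h2; exact h i (by omega) (by omega))]

lemma wseg_eq_one (g : ℕ → Equiv.Perm X) {ε : ℕ → Bool} (k n : ℕ)
    (h : ∀ i, k ≤ i → i < k + n → ε i = false) :
    wseg g ε k n = 1 := by
  induction n generalizing k with
  | zero => simp
  | succ n ih =>
      rw [wseg_succ, h k (le_refl k) (by omega), if_neg (by simp), pow_zero, one_mul]
      exact ih (k + 1) (by intro i h1 h2; exact h i (by omega) (by omega))

lemma wseg_mem (g : ℕ → Equiv.Perm X) (G : Subgroup (Equiv.Perm X))
    (hg : ∀ i, g i ∈ G) (ε : ℕ → Bool) (k n : ℕ) : wseg g ε k n ∈ G := by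
  induction n generalizing k with
  | zero => simpa using G.one_mem
  | succ n ih =>
      rw [wseg_succ]
      exact G.mul_mem (G.pow_mem (hg k) _) (ih (k + 1))

/-- Splitting a word from `0` at position `k ≤ n`. -/
lemma wseg_split (g : ℕ → Equiv.Perm X) (ε : ℕ → Bool) {k n : ℕ} (h : k ≤ n) :
    wseg g ε 0 n = wseg g ε 0 k * wseg g ε k (n - k) := by
  have : n = k + (n - k) := by omega
  rw [this, wseg_add]
  simp [Nat.add_sub_cancel_left, Nat.add_sub_cancel]

/-- A word only depends on finitely many bits. -/
lemma wseg_restrict (g : ℕ → Equiv.Perm X) (ε : ℕ → Bool) (n : ℕ) :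
    wseg g ε 0 n = wseg g (fun i => if h : i < n then ε i else false) 0 n := by
  apply wseg_congr
  intro i _ h2
  simp only [zero_add] at h2
  rw [dif_pos h2]


/-- From indiscreteness: every infinite set contains infinitely many points
moved into the set by a single element of `G`. -/
lemma exists_mover (G : Subgroup (Equiv.Perm X))
    (hind : ∀ A : Set X, A.Infinite → ¬ IsThin G A)
    {A : Set X} (hA : A.Infinite) :
    ∃ g ∈ G, {a ∈ A | g a ≠ a ∧ g a ∈ A}.Infinite := by
  have h := hind A hA
  rw [IsThin] at h
  push_neg at h
  obtain ⟨E, hE, hB⟩ := h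
  obtain ⟨hdiag, F, h1F, hFG, hEF⟩ := hE
  have key : ∀ B : Set X, B.Finite → ∃ a, a ∈ A ∧ a ∉ B ∧
      ∃ g ∈ F, g a ≠ a ∧ g a ∈ A := by
    intro B hBfin
    obtain ⟨a, haAB, hne⟩ := hB B hBfin
    have haA : a ∈ A := haAB.1
    have hsub : ({a} : Set X) ⊆ ball E {a} ∩ A :=
      Set.singleton_subset_iff.mpr ⟨⟨a, rfl, hdiag a⟩, haA⟩
    obtain ⟨y, hy, hya⟩ : ∃ y ∈ ball E {a} ∩ A, y ≠ a := by
      by_contra hcon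
      push_neg at hcon
      exact hne (Set.Subset.antisymm (fun y hy => hcon y hy) hsub)
    obtain ⟨a', ha', hEa⟩ := hy.1
    rcases ha' with rfl
    obtain ⟨g, hgF, hgy⟩ := hEF hEa
    exact ⟨a', haA, haAB.2, g, hgF, by rw [← hgy]; exact hya, by rw [← hgy]; exact hy.2⟩
  have hSinf : {a ∈ A | ∃ g ∈ F, g a ≠ a ∧ g a ∈ A}.Infinite := by
    intro hfin
    obtain ⟨a, haA, haB, g, hgF, h1, h2⟩ := key _ hfin
    exact haB ⟨haA, g, hgF, h1, h2⟩
  have hcover : {a ∈ A | ∃ g ∈ F, g a ≠ a ∧ g a ∈ A} ⊆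
      ⋃ g ∈ F, {a ∈ A | g a ≠ a ∧ g a ∈ A} := by
    rintro a ⟨haA, g, hgF, h1, h2⟩
    exact Set.mem_biUnion hgF ⟨haA, h1, h2⟩
  by_contra hcon
  push_neg at hcon
  have hfinU : (⋃ g ∈ F, {a ∈ A | g a ≠ a ∧ g a ∈ A}).Finite := by
    refine Set.Finite.biUnion F.finite_toSet fun g hgF => ?_
    exact hcon g (hFG hgF)
  exact hSinf (hfinU.subset hcover)

/-- Greedy extraction of an infinite "independent" subset for a symmetric
relation with finite fibers. -/
lemma exists_independent {A : Set X} (hA : A.Infinite) (R : X → X → Prop)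
    (hsym : ∀ a b, R a b → R b a) (hfin : ∀ a, {b | R a b}.Finite) :
    ∃ B ⊆ A, B.Infinite ∧ ∀ a ∈ B, ∀ b ∈ B, R a b → a = b := by
  classical
  have hX : Nonempty X := ⟨hA.nonempty.choose⟩
  let pick : Set X → X := fun s =>
    if h : (A \ s).Nonempty then h.choose else hA.nonempty.choose
  let Fb : ℕ → Set X := fun n => Nat.rec (∅ : Set X)
    (fun _ s => s ∪ {b | R (pick s) b} ∪ {pick s}) n
  have hFb0 : Fb 0 = ∅ := rfl
  have hFbsucc : ∀ n, Fb (n + 1) = Fb n ∪ {b | R (pick (Fb n)) b} ∪ {pick (Fb n)} :=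
    fun n => rfl
  have hFbfin : ∀ n, (Fb n).Finite := by
    intro n
    induction n with
    | zero => simp [hFb0]
    | succ n ih =>
        rw [hFbsucc]
        exact ((ih.union (hfin _)).union (Set.finite_singleton _))
  have hpick : ∀ n, pick (Fb n) ∈ A \ Fb n := by
    intro n
    have hne : (A \ Fb n).Nonempty := ((hA.diff (hFbfin n))).nonempty
    simp only [pick, dif_pos hne]
    exact hne.choose_spec
  have hmono : ∀ m n, m ≤ n → Fb m ⊆ Fb n := by
    intro m n hmn
    induction n with
    | zero => rw [Nat.le_zero] at hmn; rw [hmn]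
    | succ n ih =>
        rcases Nat.lt_or_ge m (n + 1) with h | h
        · rw [hFbsucc]
          exact (ih (by omega)).trans (by intro z hz; exact Or.inl (Or.inl hz))
        · have : m = n + 1 := by omega
          rw [this]
  set f : ℕ → X := fun n => pick (Fb n) with hf
  have hmem_succ : ∀ n, f n ∈ Fb (n + 1) := by
    intro n; rw [hFbsucc]; exact Or.inr rfl
  have hR_succ : ∀ n b, R (f n) b → b ∈ Fb (n + 1) := by
    intro n b hb; rw [hFbsucc]; exact Or.inl (Or.inr hb)
  have hfinj : Function.Injective f := by
    intro m n hmn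
    by_contra hne
    rcases lt_trichotomy m n with h | h | h
    · have h1 : f m ∈ Fb n := hmono (m + 1) n (by omega) (hmem_succ m)
      rw [hmn] at h1
      exact (hpick n).2 h1
    · exact hne h
    · have h1 : f n ∈ Fb m := hmono (n + 1) m (by omega) (hmem_succ n)
      rw [← hmn] at h1
      exact (hpick m).2 h1
  refine ⟨Set.range f, ?_, Set.infinite_range_of_injective hfinj, ?_⟩
  · rintro z ⟨n, rfl⟩; exact (hpick n).1
  · rintro a ⟨m, rfl⟩ b ⟨n, rfl⟩ hab
    by_contra hne
    have hmn : m ≠ n := fun h => hne (by rw [h])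
    rcases Nat.lt_or_ge m n with h | h
    · exact (hpick n).2 (hmono (m + 1) n (by omega) (hR_succ m _ hab))
    · exact (hpick m).2 (hmono (n + 1) m (by omega) (hR_succ n _ (hsym _ _ hab)))

/-- The injectivity invariant: all `2^n` words of `g 0, …, g (n-1)` act
injectively (in the exponent vector) at each point of `A`. -/
def inj (g : ℕ → Equiv.Perm X) (n : ℕ) (A : Set X) : Prop :=
  ∀ a ∈ A, ∀ ε ε' : ℕ → Bool,
    wseg g ε 0 n a = wseg g ε' 0 n a → ∀ i, i < n → ε i = ε' i

/-- The inductive step of the construction. -/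
lemma step_ex [Infinite X] (G : Subgroup (Equiv.Perm X))
    (hind : ∀ A : Set X, A.Infinite → ¬ IsThin G A)
    (gg : ℕ → Equiv.Perm X) (n : ℕ) (A : Set X)
    (hA : A.Infinite) (hinj : inj gg n A) :
    ∃ c : Equiv.Perm X × Set X, c.1 ∈ G ∧ c.2 ⊆ A ∧ c.2.Infinite ∧
      inj (Function.update gg n c.1) (n + 1) c.2 := by
  classical
  -- the conflict relation
  set R : X → X → Prop := fun a b => ∃ ε ε' : ℕ → Bool,
    wseg gg ε 0 n a = wseg gg ε' 0 n b with hR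
  have hsym : ∀ a b, R a b → R b a := by
    rintro a b ⟨ε, ε', h⟩; exact ⟨ε', ε, h.symm⟩
  have hfin : ∀ a, {b | R a b}.Finite := by
    intro a
    have hsub : {b | R a b} ⊆ (fun q : (ℕ → Bool) × (ℕ → Bool) =>
        (wseg gg (fun i => if h : i < n then q.2 i else false) 0 n)⁻¹
          ((wseg gg (fun i => if h : i < n then q.1 i else false) 0 n) a)) ''
        ((fun q : (Fin n → Bool) × (Fin n → Bool) =>
          ((fun i : ℕ => if h : i < n then q.1 ⟨i, h⟩ else false),
           (fun i : ℕ => if h : i < n then q.2 ⟨i, h⟩ else false))) '' Set.univ) := by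
      rintro b ⟨ε, ε', hb⟩
      refine ⟨((fun i => if h : i < n then ε i else false),
               (fun i => if h : i < n then ε' i else false)),
        ⟨((fun i : Fin n => ε i), (fun i : Fin n => ε' i)), Set.mem_univ _, ?_⟩, ?_⟩
      · rfl
      · simp only
        have e1 : wseg gg (fun i => if h : i < n then
            (if h' : i < n then ε i else false) else false) 0 n = wseg gg ε 0 n := by
          apply wseg_congr; intro i _ h2; simp only [zero_add] at h2; simp [h2]
        have e2 : wseg gg (fun i => if h : i < n then
            (if h' : i < n then ε' i else false) else false) 0 n = wseg gg ε' 0 n := by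
          apply wseg_congr; intro i _ h2; simp only [zero_add] at h2; simp [h2]
        rw [e1, e2, hb]
        simp
    exact Set.Finite.subset ((Set.finite_univ.image _).image _) hsub
  obtain ⟨B, hBA, hBinf, hBind⟩ := exists_independent hA R hsym hfin
  obtain ⟨gnew, hgG, hginf⟩ := exists_mover G hind hBinf
  refine ⟨(gnew, {a ∈ B | gnew a ≠ a ∧ gnew a ∈ B}), hgG,
    fun a ha => hBA ha.1, hginf, ?_⟩
  intro a ha ε ε' heq i hi
  obtain ⟨haB, hgne, hgaB⟩ := ha
  -- unfold the last letter
  have hsplit : ∀ ζ : ℕ → Bool, wseg (Function.update gg n gnew) ζ 0 (n + 1) a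
      = (wseg gg ζ 0 n) ((gnew ^ (if ζ n then 1 else 0)) a) := by
    intro ζ
    have hgup : wseg (Function.update gg n gnew) ζ 0 n = wseg gg ζ 0 n := by
      apply wseg_congr_g
      intro j _ hj
      simp only [zero_add] at hj
      exact Function.update_of_ne (by omega) _ _
    rw [wseg_add _ ζ 0 n 1, show (0 + n) = n from by omega, wseg_succ, wseg_zero,
      mul_one, hgup, Function.update_self, Equiv.Perm.mul_apply]
  rw [hsplit ε, hsplit ε'] at heq
  have hinjB : inj gg n B := fun b hb => hinj b (hBA hb)
  rcases Nat.lt_or_ge i n with hin | hin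
  · -- compare the heads; first rule out a mixed last letter
    have hlast : ε n = ε' n := by
      by_contra hne
      have hmix : (wseg gg ε 0 n) ((gnew ^ (if ε n then 1 else 0)) a)
          = (wseg gg ε' 0 n) ((gnew ^ (if ε' n then 1 else 0)) a) := heq
      rcases Bool.eq_false_or_eq_true (ε n) with h1 | h1 <;>
        rcases Bool.eq_false_or_eq_true (ε' n) with h2 | h2
      · exact hne (by rw [h1, h2])
      · rw [h1, h2] at hmix
        simp at hmix
        have : R (gnew a) a := ⟨ε, ε', hmix⟩
        exact hgne (hBind (gnew a) hgaB a haB this)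
      · rw [h1, h2] at hmix
        simp at hmix
        have : R a (gnew a) := ⟨ε, ε', hmix⟩
        exact hgne (hBind a haB (gnew a) hgaB this).symm
      · exact hne (by rw [h1, h2])
    rw [hlast] at heq
    rcases Bool.eq_false_or_eq_true (ε' n) with h1 | h1 <;> rw [h1] at heq
    · simp at heq
      exact hinjB (gnew a) hgaB ε ε' heq i hin
    · simp at heq
      exact hinjB a haB ε ε' heq i hin
  · -- i = n : the last letters agree
    have hi' : i = n := by omega
    subst hi'
    by_contra hne
    rcases Bool.eq_false_or_eq_true (ε i) with h1 | h1 <;>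
      rcases Bool.eq_false_or_eq_true (ε' i) with h2 | h2
    · exact hne (by rw [h1, h2])
    · rw [h1, h2] at heq
      simp at heq
      have : R (gnew a) a := ⟨ε, ε', heq⟩
      exact hgne (hBind (gnew a) hgaB a haB this)
    · rw [h1, h2] at heq
      simp at heq
      have : R a (gnew a) := ⟨ε, ε', heq⟩
      exact hgne (hBind a haB (gnew a) hgaB this).symm
    · exact hne (by rw [h1, h2])


variable [Infinite X] (G : Subgroup (Equiv.Perm X))
  (hind : ∀ A : Set X, A.Infinite → ¬ IsThin G A)

/-- The recursive construction of the sequence of permutations together with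
the decreasing sequence of infinite sets. -/
noncomputable def T : ℕ → (ℕ → Equiv.Perm X) × Set X := fun n =>
  Nat.rec ((fun _ => (1 : Equiv.Perm X)), (Set.univ : Set X))
    (fun n s =>
      if h : s.2.Infinite ∧ inj s.1 n s.2 then
        (Function.update s.1 n (step_ex G hind s.1 n s.2 h.1 h.2).choose.1,
         (step_ex G hind s.1 n s.2 h.1 h.2).choose.2)
      else ((fun _ => 1), (∅ : Set X))) n

lemma T_succ_def (n : ℕ) : T G hind (n + 1) =
    (if h : (T G hind n).2.Infinite ∧ inj (T G hind n).1 n (T G hind n).2 then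
      (Function.update (T G hind n).1 n
        (step_ex G hind (T G hind n).1 n (T G hind n).2 h.1 h.2).choose.1,
       (step_ex G hind (T G hind n).1 n (T G hind n).2 h.1 h.2).choose.2)
    else ((fun _ => 1), (∅ : Set X))) := rfl

lemma T_good (n : ℕ) :
    (T G hind n).2.Infinite ∧ inj (T G hind n).1 n (T G hind n).2 := by
  induction n with
  | zero =>
      refine ⟨Set.infinite_univ, ?_⟩
      intro a _ ε ε' _ i hi
      omega
  | succ n ih =>
      have hspec := (step_ex G hind (T G hind n).1 n (T G hind n).2 ih.1 ih.2).choose_spec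
      rw [T_succ_def, dif_pos ih]
      exact ⟨hspec.2.2.1, hspec.2.2.2⟩

/-- The sequence of permutations. -/
noncomputable def gfun : ℕ → Equiv.Perm X := fun i => (T G hind (i + 1)).1 i

lemma T_succ_eq (n : ℕ) : T G hind (n + 1) =
    (Function.update (T G hind n).1 n
      (step_ex G hind (T G hind n).1 n (T G hind n).2 (T_good G hind n).1
        (T_good G hind n).2).choose.1,
     (step_ex G hind (T G hind n).1 n (T G hind n).2 (T_good G hind n).1
        (T_good G hind n).2).choose.2) := by
  rw [T_succ_def, dif_pos (T_good G hind n)]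

lemma gfun_eq (n : ℕ) : gfun G hind n =
    (step_ex G hind (T G hind n).1 n (T G hind n).2 (T_good G hind n).1
        (T_good G hind n).2).choose.1 := by
  show (T G hind (n + 1)).1 n = _
  rw [T_succ_eq]
  exact Function.update_self _ _ _

lemma gfun_mem (n : ℕ) : gfun G hind n ∈ G := by
  rw [gfun_eq]
  exact (step_ex G hind (T G hind n).1 n (T G hind n).2 (T_good G hind n).1
    (T_good G hind n).2).choose_spec.1

lemma T_stable : ∀ n i, i < n → (T G hind n).1 i = gfun G hind i := by
  intro n
  induction n with
  | zero => intro i hi; omega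
  | succ n ih =>
      intro i hi
      rcases Nat.lt_or_ge i n with h | h
      · rw [T_succ_eq]
        simp only
        rw [Function.update_of_ne (by omega)]
        exact ih i h
      · have : i = n := by omega
        subst this
        rfl

lemma T_dec (n : ℕ) : (T G hind (n + 1)).2 ⊆ (T G hind n).2 := by
  rw [T_succ_eq]
  exact (step_ex G hind (T G hind n).1 n (T G hind n).2 (T_good G hind n).1
    (T_good G hind n).2).choose_spec.2.1

lemma inj_gfun (n : ℕ) : inj (gfun G hind) n (T G hind n).2 := by
  intro a ha ε ε' heq i hi
  have hcongr : ∀ ζ : ℕ → Bool, wseg (gfun G hind) ζ 0 n = wseg (T G hind n).1 ζ 0 n := by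
    intro ζ
    apply wseg_congr_g
    intro j _ hj
    simp only [zero_add] at hj
    exact (T_stable G hind n j hj).symm
  rw [hcongr ε, hcongr ε'] at heq
  exact (T_good G hind n).2 a ha ε ε' heq i hi

/-- The block generated by the first `n+1` permutations at a point `z`. -/
def BlkAt (z : X) (n : ℕ) : Set X :=
  {y | ∃ ε : ℕ → Bool, y = wseg (gfun G hind) ε 0 (n + 1) z}

lemma BlkAt_finite (z : X) (n : ℕ) : (BlkAt G hind z n).Finite := by
  classical
  have hsub : BlkAt G hind z n ⊆
      (fun q : Fin (n + 1) → Bool =>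
        (wseg (gfun G hind) (fun i => if h : i < n + 1 then q ⟨i, h⟩ else false)
          0 (n + 1)) z) '' Set.univ := by
    rintro y ⟨ε, rfl⟩
    refine ⟨fun j : Fin (n + 1) => ε j, Set.mem_univ _, ?_⟩
    simp only
    rw [← wseg_restrict]
  exact Set.Finite.subset (Set.finite_univ.image _) hsub

/-- Choice of a point of `(T (n+1)).2` whose block misses a given finite set. -/
noncomputable def pick (n : ℕ) (U : Set X) : X :=
  if h : ((T G hind (n + 1)).2 \
      {z | ∃ ε : ℕ → Bool, wseg (gfun G hind) ε 0 (n + 1) z ∈ U}).Nonempty then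
    h.choose
  else Classical.arbitrary X

lemma pick_spec (n : ℕ) {U : Set X} (hU : U.Finite) :
    pick G hind n U ∈ (T G hind (n + 1)).2 ∧
      ∀ ε : ℕ → Bool, wseg (gfun G hind) ε 0 (n + 1) (pick G hind n U) ∉ U := by
  classical
  have hbad : {z | ∃ ε : ℕ → Bool, wseg (gfun G hind) ε 0 (n + 1) z ∈ U}.Finite := by
    have hsub : {z | ∃ ε : ℕ → Bool, wseg (gfun G hind) ε 0 (n + 1) z ∈ U} ⊆
        ⋃ q : Fin (n + 1) → Bool,
          (fun z => (wseg (gfun G hind)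
            (fun i => if h : i < n + 1 then q ⟨i, h⟩ else false) 0 (n + 1)) z) ⁻¹' U := by
      rintro z ⟨ε, hz⟩
      refine Set.mem_iUnion.mpr ⟨fun j : Fin (n + 1) => ε j, ?_⟩
      show (wseg (gfun G hind) _ 0 (n + 1)) z ∈ U
      rw [← wseg_restrict]
      exact hz
    refine Set.Finite.subset (Set.finite_iUnion fun q => ?_) hsub
    exact hU.preimage ((Equiv.injective _).injOn)
  have hne : ((T G hind (n + 1)).2 \
      {z | ∃ ε : ℕ → Bool, wseg (gfun G hind) ε 0 (n + 1) z ∈ U}).Nonempty :=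
    ((T_good G hind (n + 1)).1.diff hbad).nonempty
  rw [pick, dif_pos hne]
  obtain ⟨h1, h2⟩ := hne.choose_spec
  exact ⟨h1, fun ε hε => h2 ⟨ε, hε⟩⟩

/-- The recursive choice of base points, with the accumulated union of blocks. -/
noncomputable def xa : ℕ → X × Set X := fun n =>
  Nat.rec (pick G hind 0 ∅, BlkAt G hind (pick G hind 0 ∅) 0)
    (fun n s => (pick G hind (n + 1) s.2,
      s.2 ∪ BlkAt G hind (pick G hind (n + 1) s.2) (n + 1))) n

/-- The base points. -/
noncomputable def xs (n : ℕ) : X := (xa G hind n).1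

lemma xa_zero : xa G hind 0 = (pick G hind 0 ∅, BlkAt G hind (pick G hind 0 ∅) 0) := rfl

lemma xa_succ (n : ℕ) : xa G hind (n + 1) =
    (pick G hind (n + 1) (xa G hind n).2,
     (xa G hind n).2 ∪ BlkAt G hind (pick G hind (n + 1) (xa G hind n).2) (n + 1)) := rfl

lemma Us_finite (n : ℕ) : ((xa G hind n).2).Finite := by
  induction n with
  | zero => rw [xa_zero]; exact BlkAt_finite G hind _ 0
  | succ n ih =>
      rw [xa_succ]
      exact ih.union (BlkAt_finite G hind _ _)

lemma xs_mem (n : ℕ) : xs G hind n ∈ (T G hind (n + 1)).2 := by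
  cases n with
  | zero => exact (pick_spec G hind 0 (Set.finite_empty)).1
  | succ n => exact (pick_spec G hind (n + 1) (Us_finite G hind n)).1

lemma blk_sub_Us {m n : ℕ} (h : m ≤ n) :
    BlkAt G hind (xs G hind m) m ⊆ (xa G hind n).2 := by
  induction n with
  | zero =>
      have : m = 0 := by omega
      subst this
      rw [xa_zero]
      exact fun y hy => hy
  | succ n ih =>
      rcases Nat.lt_or_ge m (n + 1) with h1 | h1
      · rw [xa_succ]
        exact (ih (by omega)).trans Set.subset_union_left
      · have : m = n + 1 := by omega
        subst this
        rw [xa_succ]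
        exact Set.subset_union_right

lemma blk_not_mem_Us (n : ℕ) (ε : ℕ → Bool) :
    wseg (gfun G hind) ε 0 (n + 1 + 1) (xs G hind (n + 1)) ∉ (xa G hind n).2 := by
  have := (pick_spec G hind (n + 1) (Us_finite G hind n)).2 ε
  exact this

/-- Distinct blocks are disjoint. -/
lemma blocks_disj {m n : ℕ} (h : m < n) (ε ε' : ℕ → Bool) :
    wseg (gfun G hind) ε 0 (m + 1) (xs G hind m) ≠
      wseg (gfun G hind) ε' 0 (n + 1) (xs G hind n) := by
  intro heq
  obtain ⟨k, rfl⟩ : ∃ k, n = k + 1 := ⟨n - 1, by omega⟩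
  have h1 : wseg (gfun G hind) ε 0 (m + 1) (xs G hind m) ∈ (xa G hind k).2 :=
    blk_sub_Us G hind (by omega) ⟨ε, rfl⟩
  rw [heq] at h1
  exact blk_not_mem_Us G hind k ε' h1

/-- Injectivity of the exponent vector at each base point. -/
lemma blocks_inj (n : ℕ) (ε ε' : ℕ → Bool)
    (heq : wseg (gfun G hind) ε 0 (n + 1) (xs G hind n) =
      wseg (gfun G hind) ε' 0 (n + 1) (xs G hind n)) :
    ∀ i, i ≤ n → ε i = ε' i := by
  intro i hi
  exact inj_gfun G hind (n + 1) _ (xs_mem G hind n) ε ε' heq i (by omega)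



/-! ### Bridge with `pwBlock` -/

lemma ofFn_prod_eq_wseg (g : ℕ → Equiv.Perm X) (ε : ℕ → Bool) :
    ∀ (n k : ℕ), (List.ofFn fun i : Fin n =>
      g (k + (i : ℕ)) ^ (if ε (k + (i : ℕ)) then 1 else 0)).prod = wseg g ε k n := by
  intro n
  induction n with
  | zero => intro k; simp
  | succ n ih =>
      intro k
      rw [List.ofFn_succ, List.prod_cons]
      have hfn : (fun i : Fin n => g (k + ((i.succ : Fin (n + 1)) : ℕ)) ^
          (if ε (k + ((i.succ : Fin (n + 1)) : ℕ)) then 1 else 0)) =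
          (fun i : Fin n => g ((k + 1) + (i : ℕ)) ^
            (if ε ((k + 1) + (i : ℕ)) then 1 else 0)) := by
        funext i
        have hv : k + ((i.succ : Fin (n + 1)) : ℕ) = (k + 1) + (i : ℕ) := by
          rw [Fin.val_succ]; omega
        rw [hv]
      rw [hfn, ih (k + 1), wseg_succ]
      norm_num

lemma pwBlock_eq_wseg (g : ℕ → Equiv.Perm X) (x : ℕ → X) (n : ℕ) :
    pwBlock g x n = {y | ∃ ε : ℕ → Bool, y = wseg g ε 0 (n + 1) (x n)} := by
  classical
  ext y
  simp only [pwBlock, Set.mem_setOf_eq]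
  constructor
  · rintro ⟨ε, rfl⟩
    refine ⟨fun i => if h : i < n + 1 then ε ⟨i, h⟩ else false, ?_⟩
    have hfun : (fun i : Fin (n + 1) => g i ^ (if ε i then 1 else 0)) =
        (fun i : Fin (n + 1) => g (0 + (i : ℕ)) ^
          (if (if h : 0 + (i : ℕ) < n + 1 then ε ⟨0 + (i : ℕ), h⟩ else false) then 1 else 0)) := by
      funext i
      have h1 : (0 : ℕ) + (i : ℕ) = (i : ℕ) := by omega
      rw [h1, dif_pos i.isLt, Fin.eta]
    rw [hfun, ofFn_prod_eq_wseg g (fun i => if h : i < n + 1 then ε ⟨i, h⟩ else false) (n + 1) 0]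
  · rintro ⟨ε, rfl⟩
    refine ⟨fun i : Fin (n + 1) => ε i, ?_⟩
    have hfun : (fun i : Fin (n + 1) => g i ^ (if ε (i : ℕ) then 1 else 0)) =
        (fun i : Fin (n + 1) => g (0 + (i : ℕ)) ^ (if ε (0 + (i : ℕ)) then 1 else 0)) := by
      funext i
      have h1 : (0 : ℕ) + (i : ℕ) = (i : ℕ) := by omega
      rw [h1]
    rw [hfun, ofFn_prod_eq_wseg g ε (n + 1) 0]

lemma pwBlock_ncard (n : ℕ) :
    (pwBlock (gfun G hind) (xs G hind) n).ncard = 2 ^ (n + 1) := by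
  classical
  rw [pwBlock_eq_wseg]
  set h : (Fin (n + 1) → Bool) → X := fun q =>
    wseg (gfun G hind) (fun i => if hh : i < n + 1 then q ⟨i, hh⟩ else false) 0 (n + 1)
      (xs G hind n) with hh_def
  have hset : {y | ∃ ε : ℕ → Bool, y = wseg (gfun G hind) ε 0 (n + 1) (xs G hind n)} =
      Set.range h := by
    ext y
    constructor
    · rintro ⟨ε, rfl⟩
      refine ⟨fun j : Fin (n + 1) => ε j, ?_⟩
      simp only [hh_def]
      rw [← wseg_restrict]
    · rintro ⟨q, rfl⟩
      exact ⟨_, rfl⟩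
  have hinj : Function.Injective h := by
    intro q q' hqq
    have := blocks_inj G hind n _ _ hqq
    funext j
    have hj := this j (by omega : (j : ℕ) ≤ n)
    rwa [dif_pos j.isLt, dif_pos j.isLt, Fin.eta] at hj
  rw [hset, ← Set.image_univ, Set.ncard_image_of_injective _ hinj, Set.ncard_univ]
  simp [Nat.card_eq_fintype_card]

lemma is_pwFP : IsPWShiftedFP G (⋃ n, pwBlock (gfun G hind) (xs G hind) n) := by
  refine ⟨gfun G hind, xs G hind, gfun_mem G hind, ?_, pwBlock_ncard G hind, rfl⟩
  intro m n hmn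
  rw [Set.disjoint_left]
  intro y hym hyn
  rw [pwBlock_eq_wseg] at hym hyn
  obtain ⟨ε, rfl⟩ := hym
  obtain ⟨ε', hyn⟩ := hyn
  rcases Nat.lt_or_ge m n with h | h
  · exact blocks_disj G hind h ε ε' hyn
  · exact blocks_disj G hind (by omega : n < m) ε' ε hyn.symm

/-! ### The semigroup of pairs and the idempotent ultrafilter -/

/-- Semigroup structure on `Equiv.Perm X × X` given by `(u,x)(v,y) = (uv, u y)`. -/
def psSemigroup : Semigroup (Equiv.Perm X × X) where
  mul m m' := (m.1 * m'.1, m.1 m'.2)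
  mul_assoc a b c := by
    refine Prod.ext ?_ ?_
    · exact mul_assoc a.1 b.1 c.1
    · exact Equiv.Perm.mul_apply a.1 b.1 c.2

attribute [local instance] psSemigroup Ultrafilter.semigroup

lemma ps_mul_def (m m' : Equiv.Perm X × X) : m * m' = (m.1 * m'.1, m.1 m'.2) := rfl

/-- Existence of an idempotent ultrafilter containing all tail `FP`-sets. -/
theorem exists_idem_tails {M : Type*} [Semigroup M] (a : Stream' M) :
    ∃ U : Ultrafilter M, U * U = U ∧ ∀ n, ∀ᶠ m in U, m ∈ Hindman.FP (a.drop n) := by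
  let S : Set (Ultrafilter M) := ⋂ n, { U | ∀ᶠ m in U, m ∈ Hindman.FP (a.drop n) }
  have h := exists_idempotent_in_compact_subsemigroup ?_ S ?_ ?_ ?_
  · rcases h with ⟨U, hU, U_idem⟩
    exact ⟨U, U_idem, fun n => Set.mem_iInter.mp hU n⟩
  · exact Ultrafilter.continuous_mul_left
  · apply IsCompact.nonempty_iInter_of_sequence_nonempty_isCompact_isClosed
    · intro n U hU
      filter_upwards [hU]
      rw [← Stream'.drop_drop, ← Stream'.tail_eq_drop]
      exact Hindman.FP.tail _
    · intro n
      exact ⟨pure _, Filter.mem_pure.mpr <| Hindman.FP.head _⟩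
    · exact (ultrafilter_isClosed_basic _).isCompact
    · intro n
      apply ultrafilter_isClosed_basic
  · exact IsClosed.isCompact (isClosed_iInter fun i => ultrafilter_isClosed_basic _)
  · intro U hU V hV
    rw [Set.mem_iInter] at *
    intro n
    rw [Set.mem_setOf_eq, Ultrafilter.eventually_mul]
    filter_upwards [hU n] with m hm
    obtain ⟨n', hn⟩ := Hindman.FP.mul hm
    filter_upwards [hV (n' + n)] with m' hm'
    apply hn
    simpa only [Stream'.drop_drop, add_comm] using hm'

/-- The stream of pairs `(g n, x n)`. -/
noncomputable def str : Stream' (Equiv.Perm X × X) :=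
  fun n => (gfun G hind n, xs G hind n)

/-- Prepending a letter to a word. -/
lemma word_cons (g : ℕ → Equiv.Perm X) (ζ : ℕ → Bool) (k n : ℕ) (hkn : k < n)
    (hsupp : ∀ i, ζ i = true → k + 1 ≤ i) :
    g k * wseg g ζ 0 n = wseg g (fun i => decide (i = k) || ζ i) 0 n := by
  set ζ' : ℕ → Bool := fun i => decide (i = k) || ζ i with hζ'
  have h1 : wseg g ζ' 0 n = wseg g ζ' 0 k * wseg g ζ' k (n - k) :=
    wseg_split g ζ' (by omega)
  have h2 : wseg g ζ' 0 k = 1 := by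
    apply wseg_eq_one
    intro i h1i h2i
    simp only [zero_add] at h2i
    simp only [hζ', Bool.or_eq_false_iff, decide_eq_false_iff_not]
    refine ⟨by omega, ?_⟩
    by_contra hcon
    have := hsupp i (by revert hcon; cases ζ i <;> simp)
    omega
  have h3 : n - k = 1 + (n - k - 1) := by omega
  have h4 : wseg g ζ' k (n - k) = wseg g ζ' k 1 * wseg g ζ' (k + 1) (n - k - 1) := by
    have h5 := wseg_add g ζ' k 1 (n - k - 1)
    rw [← h3] at h5
    exact h5
  have h5 : wseg g ζ' k 1 = g k := by
    rw [wseg_succ, wseg_zero, mul_one]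
    have : ζ' k = true := by simp [hζ']
    rw [this, if_pos rfl, pow_one]
  have h6 : wseg g ζ' (k + 1) (n - k - 1) = wseg g ζ (k + 1) (n - k - 1) := by
    apply wseg_congr
    intro i hi _
    simp only [hζ']
    have : decide (i = k) = false := by simp; omega
    rw [this, Bool.false_or]
  have h7 : wseg g ζ 0 n = wseg g ζ (k + 1) (n - (k + 1)) := by
    rw [wseg_split g ζ (show k + 1 ≤ n by omega)]
    have : wseg g ζ 0 (k + 1) = 1 := by
      apply wseg_eq_one
      intro i h1i h2i
      simp only [zero_add] at h2i
      by_contra hcon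
      have := hsupp i (by revert hcon; cases ζ i <;> simp)
      omega
    rw [this, one_mul]
  have h8 : n - (k + 1) = n - k - 1 := by omega
  rw [h1, h2, one_mul, h4, h5, h6, h7, h8]

/-- Concatenating two words with separated supports. -/
lemma word_glue (g : ℕ → Equiv.Perm X) (ε δ : ℕ → Bool) (n n' : ℕ) (hnn : n ≤ n')
    (hε : ∀ i, ε i = true → i ≤ n) (hδ : ∀ i, δ i = true → n + 1 ≤ i) :
    wseg g ε 0 (n + 1) * wseg g δ 0 (n' + 1) =
      wseg g (fun i => ε i || δ i) 0 (n' + 1) := by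
  set γ : ℕ → Bool := fun i => ε i || δ i with hγ
  have h1 : wseg g γ 0 (n' + 1) = wseg g γ 0 (n + 1) * wseg g γ (n + 1) (n' - n) := by
    have h1' := wseg_split g γ (show n + 1 ≤ n' + 1 by omega)
    rw [show n' + 1 - (n + 1) = n' - n from by omega] at h1'
    exact h1'
  have h2 : wseg g γ 0 (n + 1) = wseg g ε 0 (n + 1) := by
    apply wseg_congr
    intro i _ h2i
    simp only [zero_add] at h2i
    simp only [hγ]
    have : δ i = false := by
      by_contra hcon
      have := hδ i (by revert hcon; cases δ i <;> simp)
      omega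
    rw [this, Bool.or_false]
  have h3 : wseg g γ (n + 1) (n' - n) = wseg g δ (n + 1) (n' - n) := by
    apply wseg_congr
    intro i hi _
    simp only [hγ]
    have : ε i = false := by
      by_contra hcon
      have := hε i (by revert hcon; cases ε i <;> simp)
      omega
    rw [this, Bool.false_or]
  have h4 : wseg g δ 0 (n' + 1) = wseg g δ (n + 1) (n' - n) := by
    have h4' := wseg_split g δ (show n + 1 ≤ n' + 1 by omega)
    rw [show n' + 1 - (n + 1) = n' - n from by omega] at h4'
    rw [h4']
    have h5 : wseg g δ 0 (n + 1) = 1 := by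
      apply wseg_eq_one
      intro i h1i h2i
      simp only [zero_add] at h2i
      by_contra hcon
      have := hδ i (by revert hcon; cases δ i <;> simp)
      omega
    rw [h5, one_mul]
  rw [h1, h2, h3, h4]

/-- Characterization of the members of the tail `FP`-sets. -/
lemma fp_char {m : Equiv.Perm X × X} {b : Stream' (Equiv.Perm X × X)}
    (hm : m ∈ Hindman.FP b) :
    ∀ k, b = (str G hind).drop k →
    ∃ n, k ≤ n ∧ ∃ ε δ : ℕ → Bool,
      (∀ i, ε i = true → k ≤ i ∧ i ≤ n) ∧ ε n = true ∧
      (∀ i, δ i = true → k ≤ i ∧ i < n) ∧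
      m.1 = wseg (gfun G hind) ε 0 (n + 1) ∧
      m.2 = wseg (gfun G hind) δ 0 (n + 1) (xs G hind n) := by
  induction hm with
  | head' b =>
      intro k hbk
      subst hbk
      refine ⟨k, le_refl k, fun i => decide (i = k), fun _ => false, ?_, by simp, by simp, ?_, ?_⟩
      · intro i hi
        simp only [decide_eq_true_eq] at hi
        omega
      · have hhead : ((str G hind).drop k).head = (gfun G hind k, xs G hind k) := by
          rw [Stream'.head_drop]; rfl
        rw [hhead]
        have h1 : wseg (gfun G hind) (fun i => decide (i = k)) 0 (k + 1) =
            wseg (gfun G hind) (fun i => decide (i = k)) 0 k *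
              wseg (gfun G hind) (fun i => decide (i = k)) k 1 := by
          have h1' := wseg_add (gfun G hind) (fun i => decide (i = k)) 0 k 1
          rw [Nat.zero_add] at h1'
          exact h1'
        have h2 : wseg (gfun G hind) (fun i => decide (i = k)) 0 k = 1 := by
          apply wseg_eq_one
          intro i h1i h2i
          simp only [zero_add] at h2i
          simp only [decide_eq_false_iff_not]
          omega
        have h3 : wseg (gfun G hind) (fun i => decide (i = k)) k 1 = gfun G hind k := by
          rw [wseg_succ, wseg_zero, mul_one]
          simp
        rw [h1, h2, h3, one_mul]
      · have hhead : ((str G hind).drop k).head = (gfun G hind k, xs G hind k) := by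
          rw [Stream'.head_drop]; rfl
        rw [hhead]
        have : wseg (gfun G hind) (fun _ => false) 0 (k + 1) = 1 :=
          wseg_eq_one _ _ _ (fun _ _ _ => rfl)
        rw [this]
        simp
  | tail' b m hm ih =>
      intro k hbk
      have htail : b.tail = (str G hind).drop (k + 1) := by
        rw [hbk, Stream'.tail_drop']
      obtain ⟨n, hkn, ε, δ, hε, hεn, hδ, h1, h2⟩ := ih (k + 1) htail
      exact ⟨n, by omega, ε, δ, fun i hi => ⟨by have := hε i hi; omega, (hε i hi).2⟩, hεn,
        fun i hi => ⟨by have := hδ i hi; omega, (hδ i hi).2⟩, h1, h2⟩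
  | cons' b m hm ih =>
      intro k hbk
      have htail : b.tail = (str G hind).drop (k + 1) := by
        rw [hbk, Stream'.tail_drop']
      obtain ⟨n, hkn, ε, δ, hε, hεn, hδ, h1, h2⟩ := ih (k + 1) htail
      have hhead : b.head = (gfun G hind k, xs G hind k) := by
        rw [hbk, Stream'.head_drop]; rfl
      refine ⟨n, by omega, fun i => decide (i = k) || ε i, fun i => decide (i = k) || δ i,
        ?_, ?_, ?_, ?_, ?_⟩
      · intro i hi
        rcases Bool.or_eq_true_iff.mp hi with h | h
        · simp only [decide_eq_true_eq] at h; omega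
        · have := hε i h; omega
      · have : ε n = true := hεn
        simp [this]
      · intro i hi
        rcases Bool.or_eq_true_iff.mp hi with h | h
        · simp only [decide_eq_true_eq] at h; omega
        · have := hδ i h; omega
      · rw [hhead, ps_mul_def]
        simp only
        rw [h1]
        exact word_cons (gfun G hind) ε k (n + 1) (by omega)
          (fun i hi => by have := hε i hi; omega)
      · rw [hhead, ps_mul_def]
        simp only
        rw [h2, ← Equiv.Perm.mul_apply]
        rw [word_cons (gfun G hind) δ k (n + 1) (by omega)
          (fun i hi => by have := hδ i hi; omega)]

/-! ### The ultrafilter with non-discrete orbit -/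

/-- The idempotent ultrafilter on pairs containing all tail FP-sets. -/
noncomputable def bigU : Ultrafilter (Equiv.Perm X × X) :=
  (exists_idem_tails (str G hind)).choose

lemma bigU_spec : bigU G hind * bigU G hind = bigU G hind ∧
    ∀ n, ∀ᶠ m in bigU G hind, m ∈ Hindman.FP ((str G hind).drop n) :=
  (exists_idem_tails (str G hind)).choose_spec

lemma tails_mem (k : ℕ) :
    {m | m ∈ Hindman.FP ((str G hind).drop k)} ∈ bigU G hind := by
  have := (bigU_spec G hind).2 k
  rwa [Filter.eventually_iff] at this

/-- The distinguished free ultrafilter on `X`. -/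
noncomputable def pUF : Ultrafilter X := (bigU G hind).map Prod.snd

lemma pUF_free : IsFree (pUF G hind) := by
  classical
  intro s hs
  have hsc : sᶜ.Finite := Filter.mem_cofinite.mp hs
  set I : Set ℕ :=
    {n | ∃ ε : ℕ → Bool, wseg (gfun G hind) ε 0 (n + 1) (xs G hind n) ∈ sᶜ} with hI
  set F : ℕ → X := fun n =>
    if h : n ∈ I then wseg (gfun G hind) h.choose 0 (n + 1) (xs G hind n)
    else Classical.arbitrary X with hF
  have hFmem : ∀ n ∈ I, F n ∈ sᶜ := by
    intro n hn
    simp only [hF, dif_pos hn]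
    exact hn.choose_spec
  have hFval : ∀ n (hn : n ∈ I),
      F n = wseg (gfun G hind) hn.choose 0 (n + 1) (xs G hind n) := by
    intro n hn
    simp only [hF, dif_pos hn]
  have hFinj : Set.InjOn F I := by
    intro a ha b hb hab
    by_contra hne
    rcases lt_trichotomy a b with h | h | h
    · rw [hFval a ha, hFval b hb] at hab
      exact blocks_disj G hind h _ _ hab
    · exact hne h
    · rw [hFval a ha, hFval b hb] at hab
      exact blocks_disj G hind h _ _ hab.symm
  have hIfin : I.Finite := by
    refine Set.Finite.of_finite_image (hsc.subset ?_) hFinj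
    rintro y ⟨n, hn, rfl⟩
    exact hFmem n hn
  obtain ⟨k, hk⟩ := hIfin.bddAbove
  have hmem : Prod.snd ⁻¹' s ∈ bigU G hind := by
    refine Filter.mem_of_superset (tails_mem G hind (k + 1)) ?_
    intro m hm
    obtain ⟨n, hkn, ε, δ, hε, hεn, hδ, h1, h2⟩ := fp_char G hind hm (k + 1) rfl
    show m.2 ∈ s
    by_contra hcon
    have hnI : n ∈ I := ⟨δ, by rw [← h2]; exact hcon⟩
    have := hk hnI
    omega
  exact Ultrafilter.mem_coe.mpr (Ultrafilter.mem_map.mpr hmem)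

/-- The key non-isolation property of `pUF`. -/
lemma key_lemma (s : Set X) (hs : s ∈ pUF G hind) :
    ∃ u : Equiv.Perm X, u ∈ G ∧ s ∈ Ultrafilter.map (⇑u) (pUF G hind) ∧
      Ultrafilter.map (⇑u) (pUF G hind) ≠ pUF G hind := by
  classical
  have hsU : Prod.snd ⁻¹' s ∈ bigU G hind := Ultrafilter.mem_map.mp hs
  have hidem := (bigU_spec G hind).1
  have h1 : ∀ᶠ m : Equiv.Perm X × X in (bigU G hind : Filter (Equiv.Perm X × X)),
      ∀ᶠ m' : Equiv.Perm X × X in (bigU G hind : Filter (Equiv.Perm X × X)),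
      m * m' ∈ Prod.snd ⁻¹' s := by
    refine (Ultrafilter.eventually_mul (bigU G hind) (bigU G hind)
      (fun m => m ∈ Prod.snd ⁻¹' s)).mp ?_
    rw [hidem]
    exact Filter.eventually_iff.mpr (by rwa [Set.setOf_mem_eq])
  have h2 : ∀ᶠ m in bigU G hind, m ∈ Hindman.FP ((str G hind).drop 0) :=
    (bigU_spec G hind).2 0
  obtain ⟨m, hm1, hm2⟩ := (h1.and h2).exists
  obtain ⟨n, -, ε, δ, hε, hεn, hδ, hm1eq, hm2eq⟩ := fp_char G hind hm2 0 rfl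
  refine ⟨m.1, ?_, ?_, ?_⟩
  · rw [hm1eq]
    exact wseg_mem _ G (gfun_mem G hind) _ _ _
  · exact Ultrafilter.mem_map.mpr (Ultrafilter.mem_map.mpr hm1)
  · intro heqp
    set T : Set X := Prod.snd '' {m' | m' ∈ Hindman.FP ((str G hind).drop (n + 1))}
      with hTdef
    have hT : T ∈ pUF G hind :=
      Ultrafilter.mem_map.mpr (Filter.mem_of_superset (tails_mem G hind (n + 1))
        (Set.subset_preimage_image _ _))
    have hT2 : (⇑m.1) ⁻¹' T ∈ pUF G hind := by
      refine Ultrafilter.mem_map.mp ?_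
      rw [heqp]
      exact hT
    have hne : (T ∩ (⇑m.1) ⁻¹' T).Nonempty :=
      Ultrafilter.nonempty_of_mem (Filter.inter_mem hT hT2)
    obtain ⟨y, hyT, hyuT⟩ := hne
    obtain ⟨m', hm', hm'y⟩ := hyT
    obtain ⟨n', hn'1, ε', δ', hε', hεn', hδ', hm'1, hm'2⟩ :=
      fp_char G hind hm' (n + 1) rfl
    obtain ⟨m'', hm'', hm''y⟩ := hyuT
    obtain ⟨n'', hn''1, ε'', δ'', hε'', hεn'', hδ'', hm''1, hm''2⟩ :=
      fp_char G hind hm'' (n + 1) rfl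
    -- compute `m.1 y`
    have hglue : m.1 y = wseg (gfun G hind) (fun i => ε i || δ' i) 0 (n' + 1)
        (xs G hind n') := by
      rw [← hm'y, hm'2, hm1eq, ← Equiv.Perm.mul_apply,
        word_glue (gfun G hind) ε δ' n n' (by omega)
          (fun i hi => (hε i hi).2) (fun i hi => (hδ' i hi).1)]
    rw [hm''2] at hm''y
    rw [← hm''y] at hglue
    have hn'eq : n'' = n' := by
      by_contra hcon
      rcases lt_trichotomy n'' n' with h | h | h
      · exact blocks_disj G hind h _ _ hglue
      · exact hcon h
      · exact blocks_disj G hind h _ _ hglue.symm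
    subst hn'eq
    have := blocks_inj G hind n'' _ _ hglue n (by omega)
    have hd : δ'' n = false := by
      by_contra hcon
      have h3 := hδ'' n (by revert hcon; cases δ'' n <;> simp)
      omega
    rw [hd, hεn] at this
    simp at this

end IndiscreteAux



/-- If `(X,𝓔)` is a finitary indiscrete coarse space with
`(X,𝓔) = X_G`, then some free ultrafilter has non-discrete orbit in `X*`;
equivalently `X` is not scattered: it contains a piece-wise shifted FP-set. -/
theorem indiscrete_nondiscrete_orbit {X : Type*} [Infinite X] (C : CoarseStructure X)
    (hfin : C.Finitary) (G : Subgroup (Equiv.Perm X)) (hG : C.sets = XGsets G)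
    (hind : ∀ A : Set X, A.Infinite → ¬ IsThin G A) :
    (∃ p : Ultrafilter X, IsFree p ∧ ¬ DiscreteTopology ↥(freeOrbit G p)) ∧
    (∃ Y : Set X, IsPWShiftedFP G Y) := by
  classical
  refine ⟨?_, ⟨_, IndiscreteAux.is_pwFP G hind⟩⟩
  set p := IndiscreteAux.pUF G hind with hp
  have hfree : IsFree p := IndiscreteAux.pUF_free G hind
  refine ⟨p, hfree, ?_⟩
  intro hdisc
  have hporb : p ∈ ufOrbit G p :=
    ⟨1, G.one_mem, by rw [Equiv.Perm.coe_one, Ultrafilter.map_id]⟩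
  set pt : ↥(freeOrbit G p) := ⟨⟨p, hfree⟩, hporb⟩ with hpt_def
  have hopen : IsOpen ({pt} : Set ↥(freeOrbit G p)) := isOpen_discrete _
  rw [isOpen_induced_iff] at hopen
  obtain ⟨V, hV, hVeq⟩ := hopen
  replace hV := (isOpen_induced_iff (f := (Subtype.val : {p : Ultrafilter X // IsFree p} → Ultrafilter X))).mp hV
  obtain ⟨W, hW, hWeq⟩ := hV
  have hpW : p ∈ W := by
    have h1 : pt ∈ Subtype.val ⁻¹' V := by rw [hVeq]; exact Set.mem_singleton _
    have h2 : (⟨p, hfree⟩ : FreeUF X) ∈ V := h1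
    rw [← hWeq] at h2
    exact h2
  obtain ⟨t, ht, hptt, htW⟩ := ultrafilterBasis_is_basis.exists_subset_of_mem_open hpW hW
  obtain ⟨sB, rfl⟩ := ht
  have hsBp : sB ∈ p := hptt
  obtain ⟨u, huG, hsu, hneq⟩ := IndiscreteAux.key_lemma G hind sB hsBp
  have hqfree : IsFree (Ultrafilter.map (⇑u) p) := by
    intro t ht
    have h1 : (⇑u ⁻¹' t) ∈ Filter.cofinite := by
      rw [Filter.mem_cofinite, ← Set.preimage_compl]
      exact (Filter.mem_cofinite.mp ht).preimage (u.injective.injOn)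
    exact Ultrafilter.mem_coe.mpr (Ultrafilter.mem_map.mpr (hfree h1))
  have hqorb : Ultrafilter.map (⇑u) p ∈ ufOrbit G p := ⟨u, huG, rfl⟩
  have heV : (⟨⟨Ultrafilter.map (⇑u) p, hqfree⟩, hqorb⟩ : ↥(freeOrbit G p)) ∈
      Subtype.val ⁻¹' V := by
    show (⟨Ultrafilter.map (⇑u) p, hqfree⟩ : FreeUF X) ∈ V
    rw [← hWeq]
    exact htW hsu
  rw [hVeq] at heV
  have heq := Set.mem_singleton_iff.mp heV
  have : Ultrafilter.map (⇑u) p = p := by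
    have h1 := congrArg (fun z : ↥(freeOrbit G p) => z.1.1) heq
    exact h1
  exact hneq this
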